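/- Let d ≥ 2 and T ≥ 1. For any online algorithm on the probability simplex — i.e., any family of maps f_t producing x^(t) = f_t(ℓ^(1),…,ℓ^(t−1)) ∈ Δ_d for t = 1,…,T — there exist loss vectors ℓ^(1),…,ℓ^(T) ∈ ℝ^d with ‖ℓ^(t)‖_∞ ≤ 1 for all t, and a comparator u ∈ Δ_d, such that Σ_{t=1}^T ⟨x^(t) − u, ℓ^(t)⟩ ≥ √(T/2). -/

import Mathlib

open Finset

noncomputable section

/-- The `(d-1)`-dimensional probability simplex in `ℝ^d`. -/
def simplex (d : ℕ) : Set (Fin d → ℝ) :=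
  {x | (∀ k, 0 ≤ x k) ∧ ∑ k, x k = 1}

/-- Standard inner product on `ℝ^d`. -/
def inp {d : ℕ} (u v : Fin d → ℝ) : ℝ := ∑ k, u k * v k

/-- `ℓ¹` norm. -/
def l1 {d : ℕ} (v : Fin d → ℝ) : ℝ := ∑ k, |v k|

/-- `ℓ∞` norm. -/
def linf {d : ℕ} (v : Fin d → ℝ) : ℝ := ⨆ k, |v k|

/-- Matrix-vector product `A y`. -/
def mvec {d e : ℕ} (A : Fin d → Fin e → ℝ) (v : Fin e → ℝ) : Fin d → ℝ :=
  fun i => ∑ j, A i j * v j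

/-- Transposed matrix-vector product `Aᵀ x`. -/
def tvec {d e : ℕ} (A : Fin d → Fin e → ℝ) (v : Fin d → ℝ) : Fin e → ℝ :=
  fun j => ∑ i, A i j * v i

/-- Row-stochastic matrices. -/
def rowStoch {m : ℕ} (M : Fin m → Fin m → ℝ) : Prop :=
  ∀ a, M a ∈ simplex m

/-- Shannon entropy. -/
def shannonH {d : ℕ} (x : Fin d → ℝ) : ℝ := ∑ k, x k * Real.log (1 / x k)

/-- Log-barrier regularizer. -/
def logBarrier {d : ℕ} (x : Fin d → ℝ) : ℝ := -∑ k, Real.log (x k)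

/-- Local norm `‖h‖_{x,φ}` induced by the Hessian of the log-barrier at `x`. -/
def locNorm {d : ℕ} (x h : Fin d → ℝ) : ℝ := Real.sqrt (∑ k, (h k) ^ 2 / (x k) ^ 2)

/-- Dual local norm `‖h‖_{*,x,φ}` for the log-barrier at `x`. -/
def dualLocNorm {d : ℕ} (x h : Fin d → ℝ) : ℝ := Real.sqrt (∑ k, (x k) ^ 2 * (h k) ^ 2)

/-- `log₊ z = max (log z) 4`. -/
def logp (z : ℕ) : ℝ := max (Real.log z) 4

lemma myCB_sq (m : ℕ) (hm : 1 ≤ m) : 16 ^ m ≤ 4 * m * (Nat.centralBinom m) ^ 2 := by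
  induction m with
  | zero => omega
  | succ n ih =>
    rcases Nat.eq_or_lt_of_le hm with h | h
    · have : n = 0 := by omega
      subst this
      simp [Nat.centralBinom]
    · have hn : 1 ≤ n := by omega
      have ih := ih hn
      have key : (n + 1) * Nat.centralBinom (n + 1) = 2 * (2 * n + 1) * Nat.centralBinom n :=
        Nat.succ_mul_centralBinom_succ n
      set C := Nat.centralBinom n with hC
      have hmul : 16 ^ (n + 1) * (n + 1) ^ 2 ≤ 4 * (n + 1) * (Nat.centralBinom (n + 1)) ^ 2 * (n + 1) ^ 2 := by
        have h1 : 4 * (n + 1) * (Nat.centralBinom (n + 1)) ^ 2 * (n + 1) ^ 2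
            = 4 * (n + 1) * ((n + 1) * Nat.centralBinom (n + 1)) ^ 2 := by ring
        rw [h1, key]
        calc 16 ^ (n + 1) * (n + 1) ^ 2 = (16 ^ n) * (16 * (n + 1) ^ 2) := by ring
          _ ≤ (4 * n * C ^ 2) * (16 * (n + 1) ^ 2) := Nat.mul_le_mul_right _ ih
          _ = (4 * n * (n + 1)) * (16 * (n + 1) * C ^ 2) := by ring
          _ ≤ ((2 * n + 1) ^ 2) * (16 * (n + 1) * C ^ 2) := by
              refine Nat.mul_le_mul_right _ ?_
              nlinarith
          _ = 4 * (n + 1) * (2 * (2 * n + 1) * C) ^ 2 := by ring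
      have hpos : 0 < (n + 1) ^ 2 := by positivity
      exact Nat.le_of_mul_le_mul_right hmul hpos

/-- real version: `4^m ≤ 2 √m C(2m,m)`. -/
lemma myCB_real (m : ℕ) (hm : 1 ≤ m) :
    (4 : ℝ) ^ m ≤ 2 * Real.sqrt m * (Nat.centralBinom m : ℝ) := by
  have h := myCB_sq m hm
  have h' : (16 : ℝ) ^ m ≤ 4 * m * (Nat.centralBinom m : ℝ) ^ 2 := by exact_mod_cast h
  have hsq : Real.sqrt m ^ 2 = (m : ℝ) := Real.sq_sqrt (by positivity)
  have hs : (0 : ℝ) ≤ Real.sqrt m := Real.sqrt_nonneg m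
  have hCpos : (0 : ℝ) < (Nat.centralBinom m : ℝ) := by exact_mod_cast Nat.centralBinom_pos m
  calc (4 : ℝ) ^ m = Real.sqrt ((16 : ℝ) ^ m) := by
        rw [show (16 : ℝ) = 4 ^ 2 by norm_num, ← pow_mul, mul_comm 2 m, pow_mul,
          Real.sqrt_sq (by positivity)]
    _ ≤ Real.sqrt (4 * m * (Nat.centralBinom m : ℝ) ^ 2) := Real.sqrt_le_sqrt h'
    _ = Real.sqrt ((2 * Real.sqrt m * (Nat.centralBinom m : ℝ)) ^ 2) := by
        congr 1
        nlinarith [hsq]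
    _ = 2 * Real.sqrt m * (Nat.centralBinom m : ℝ) := Real.sqrt_sq (by positivity)

/-- The Khintchine binomial sum. -/
def Aker (n : ℕ) : ℝ := ∑ k ∈ Finset.range (n + 1), (n.choose k : ℝ) * |2 * (k : ℝ) - n|

lemma myPointf (n k : ℕ) :
    |2 * (k : ℝ) - (n + 1)| + |2 * ((k : ℝ) + 1) - (n + 1)|
      = 2 * |2 * (k : ℝ) - n| + (if 2 * k = n then 2 else 0) := by
  rcases lt_trichotomy (2 * k) n with h | h | h
  · have h1 : 2 * (k : ℝ) + 1 ≤ n := by exact_mod_cast (show 2 * k + 1 ≤ n by omega)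
    rw [if_neg (by omega), abs_of_nonpos (by linarith), abs_of_nonpos (by linarith),
      abs_of_nonpos (by linarith)]
    ring
  · have h1 : (n : ℝ) = 2 * k := by exact_mod_cast h.symm
    rw [if_pos h, h1]
    rw [show 2 * (k : ℝ) - (2 * (k : ℝ) + 1) = -1 by ring,
      show 2 * ((k : ℝ) + 1) - (2 * (k : ℝ) + 1) = 1 by ring]
    norm_num
  · have h1 : (n : ℝ) + 1 ≤ 2 * k := by exact_mod_cast (show n + 1 ≤ 2 * k by omega)
    rw [if_neg (by omega), abs_of_nonneg (by linarith), abs_of_nonneg (by linarith),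
      abs_of_nonneg (by linarith)]
    ring

lemma Aker_succ (n : ℕ) :
    Aker (n + 1) = 2 * Aker n + (if 2 ∣ n then 2 * (n.choose (n / 2) : ℝ) else 0) := by
  have hsplit : Aker (n + 1)
      = ∑ k ∈ Finset.range (n + 1), (n.choose k : ℝ)
          * (|2 * (k : ℝ) - (n + 1)| + |2 * ((k : ℝ) + 1) - (n + 1)|) := by
    unfold Aker
    rw [Finset.sum_range_succ' (fun k => ((n + 1).choose k : ℝ) * |2 * (k : ℝ) - (n + 1 : ℕ)|) (n + 1)]
    have hshift : ∑ k ∈ Finset.range (n + 1),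
          ((n + 1).choose (k + 1) : ℝ) * |2 * ((k : ℝ) + 1) - (n + 1)|
        = ∑ k ∈ Finset.range (n + 1),
            ((n.choose k : ℝ) * |2 * ((k : ℝ) + 1) - (n + 1)|
              + (n.choose (k + 1) : ℝ) * |2 * ((k : ℝ) + 1) - (n + 1)|) := by
      refine Finset.sum_congr rfl fun k _ => ?_
      rw [Nat.choose_succ_succ]
      push_cast
      ring
    have htail : ∑ k ∈ Finset.range (n + 1),
          (n.choose (k + 1) : ℝ) * |2 * ((k : ℝ) + 1) - (n + 1)|
        = ∑ k ∈ Finset.range (n + 1), (n.choose k : ℝ) * |2 * (k : ℝ) - (n + 1)|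
            - (n.choose 0 : ℝ) * |2 * (0 : ℝ) - (n + 1)| := by
      have := Finset.sum_range_succ' (fun k => (n.choose k : ℝ) * |2 * (k : ℝ) - (n + 1)|) (n + 1)
      have hlast : (n.choose (n + 1) : ℝ) * |2 * ((n + 1 : ℕ) : ℝ) - (n + 1)| = 0 := by
        simp [Nat.choose_succ_self]
      rw [Finset.sum_range_succ] at this
      push_cast at this hlast ⊢
      rw [hlast] at this
      linarith [this]
    push_cast at hshift htail ⊢
    rw [hshift, Finset.sum_add_distrib, htail]
    simp only [mul_add, Finset.sum_add_distrib, Nat.choose_zero_right, Nat.cast_one, one_mul]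
    ring
  rw [hsplit]
  have h2 : ∀ k ∈ Finset.range (n + 1),
      (n.choose k : ℝ) * (|2 * (k : ℝ) - (n + 1)| + |2 * ((k : ℝ) + 1) - (n + 1)|)
        = 2 * ((n.choose k : ℝ) * |2 * (k : ℝ) - n|)
          + (if 2 * k = n then 2 * (n.choose k : ℝ) else 0) := by
    intro k _
    rw [myPointf]
    split_ifs <;> ring
  rw [Finset.sum_congr rfl h2, Finset.sum_add_distrib, ← Finset.mul_sum]
  unfold Aker
  congr 1
  by_cases hpar : 2 ∣ n
  · obtain ⟨m, rfl⟩ := hpar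
    rw [if_pos ⟨m, rfl⟩]
    have : ∀ k ∈ Finset.range (2 * m + 1),
        (if 2 * k = 2 * m then 2 * ((2 * m).choose k : ℝ) else 0)
          = (if k = m then 2 * ((2 * m).choose m : ℝ) else 0) := by
      intro k _
      by_cases hk : k = m
      · subst hk; simp
      · rw [if_neg (by omega), if_neg hk]
    rw [Finset.sum_congr rfl this, Finset.sum_ite_eq' (Finset.range (2 * m + 1)) m]
    rw [if_pos (Finset.mem_range.2 (by omega))]
    have h2m : 2 * m / 2 = m := by omega
    rw [h2m]
  · rw [if_neg hpar]
    refine Finset.sum_eq_zero fun k _ => ?_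
    rw [if_neg (fun hc => hpar ⟨k, hc.symm⟩)]

lemma Aker_zero : Aker 0 = 0 := by simp [Aker]

lemma Aker_one : Aker 1 = 2 := by
  rw [show Aker 1 = Aker (0 + 1) from rfl, Aker_succ, Aker_zero]
  norm_num

lemma Aker_two : Aker 2 = 4 := by
  show Aker (1 + 1) = 4
  rw [Aker_succ, Aker_one]
  norm_num

/-- helper: `√(m + c) ≤ √m + 1/(2√m)` for `m ≥ 1`, `c ≤ 1`. -/
lemma mySqrt_step (m : ℕ) (hm : 1 ≤ m) (c : ℝ) (hc0 : 0 ≤ c) (hc1 : c ≤ 1) :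
    Real.sqrt ((m : ℝ) + c) ≤ Real.sqrt m + 1 / (2 * Real.sqrt m) := by
  have hm0 : (1 : ℝ) ≤ (m : ℝ) := by exact_mod_cast hm
  have hr : (0 : ℝ) < Real.sqrt m := Real.sqrt_pos.2 (by linarith)
  have hsq : Real.sqrt m ^ 2 = (m : ℝ) := Real.sq_sqrt (by linarith)
  calc Real.sqrt ((m : ℝ) + c)
      ≤ Real.sqrt ((Real.sqrt m + 1 / (2 * Real.sqrt m)) ^ 2) := by
        apply Real.sqrt_le_sqrt
        have : (Real.sqrt m + 1 / (2 * Real.sqrt m)) ^ 2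
            = (m : ℝ) + 1 + 1 / (4 * m) := by
          field_simp
          linear_combination (16 * (m : ℝ) * Real.sqrt m ^ 2 - 4) * hsq
        rw [this]
        have : 0 < 1 / (4 * (m : ℝ)) := by positivity
        linarith
    _ = Real.sqrt m + 1 / (2 * Real.sqrt m) := Real.sqrt_sq (by positivity)

lemma Aker_even (m : ℕ) (hm : 1 ≤ m) : (4 : ℝ) ^ m * Real.sqrt m ≤ Aker (2 * m) := by
  induction m with
  | zero => omega
  | succ n ih =>
    rcases Nat.eq_or_lt_of_le hm with h | h
    · have : n = 0 := by omega
      subst this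
      norm_num [Aker_two]
    · have hn : 1 ≤ n := by omega
      have ih := ih hn
      have h1 : Aker (2 * n + 1) = 2 * Aker (2 * n) + 2 * (Nat.centralBinom n : ℝ) := by
        rw [Aker_succ]
        rw [if_pos ⟨n, rfl⟩]
        have : 2 * n / 2 = n := by omega
        rw [this, Nat.centralBinom]
      have h2 : Aker (2 * (n + 1)) = 2 * Aker (2 * n + 1) := by
        rw [show 2 * (n + 1) = (2 * n + 1) + 1 by ring, Aker_succ,
          if_neg (by omega)]
        ring
      rw [h2, h1]
      have hcb := myCB_real n hn
      have hsqrt := mySqrt_step n hn 1 (by norm_num) (by norm_num)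
      have hr : (0 : ℝ) < Real.sqrt n := Real.sqrt_pos.2 (by exact_mod_cast hn)
      have h4 : (0 : ℝ) < (4 : ℝ) ^ n := by positivity
      -- 4^{n+1} √(n+1) ≤ 4·4^n(√n + 1/(2√n)) ≤ 4 Aker(2n) + 4 C
      have hC : (4 : ℝ) ^ n / Real.sqrt n ≤ 2 * (Nat.centralBinom n : ℝ) := by
        rw [div_le_iff₀ hr] at *
        nlinarith [hcb]
      have : (4 : ℝ) ^ (n + 1) * Real.sqrt ((n : ℕ) + 1 : ℝ)
          ≤ 4 * ((4 : ℝ) ^ n * Real.sqrt n) + 4 * (Nat.centralBinom n : ℝ) := by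
        have e1 : ((n : ℝ) + 1) = ((n : ℝ) + (1 : ℝ)) := rfl
        have := hsqrt
        have h5 : (4 : ℝ) ^ (n + 1) * Real.sqrt ((n : ℝ) + 1)
            ≤ (4 : ℝ) ^ (n + 1) * (Real.sqrt n + 1 / (2 * Real.sqrt n)) := by
          apply mul_le_mul_of_nonneg_left this (by positivity)
        have h6 : (4 : ℝ) ^ (n + 1) * (Real.sqrt n + 1 / (2 * Real.sqrt n))
            = 4 * ((4 : ℝ) ^ n * Real.sqrt n) + 2 * ((4 : ℝ) ^ n / Real.sqrt n) := by
          field_simp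
          ring
        nlinarith [hC]
      push_cast at this ⊢
      nlinarith [ih, this]

lemma Aker_lower (n : ℕ) (hn : 1 ≤ n) :
    (2 : ℝ) ^ n * Real.sqrt ((n : ℝ) / 2) ≤ Aker n := by
  rcases Nat.even_or_odd n with ⟨m, hm⟩ | ⟨m, hm⟩
  · subst hm
    have hm1 : 1 ≤ m := by omega
    have := Aker_even m hm1
    have he : Real.sqrt (((m + m : ℕ) : ℝ) / 2) = Real.sqrt m := by
      congr 1
      push_cast
      ring
    have hp : (2 : ℝ) ^ (m + m) = 4 ^ m := by
      rw [← two_mul, pow_mul]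
      norm_num
    rw [he, hp]
    rw [show m + m = 2 * m by ring] at *
    exact this
  · subst hm
    rcases Nat.eq_or_lt_of_le (show 0 ≤ m by omega) with h0 | h0
    · -- m = 0, n = 1
      have : m = 0 := h0.symm
      subst this
      norm_num [Aker_one]
      have h2 : (1 : ℝ) ≤ Real.sqrt 2 := by
        rw [show (1 : ℝ) = Real.sqrt 1 by simp]
        exact Real.sqrt_le_sqrt (by norm_num)
      exact inv_le_one_of_one_le₀ h2
    · have hm1 : 1 ≤ m := by omega
      have hA : Aker (2 * m + 1) = 2 * Aker (2 * m) + 2 * (Nat.centralBinom m : ℝ) := by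
        rw [Aker_succ, if_pos ⟨m, rfl⟩]
        have : 2 * m / 2 = m := by omega
        rw [this, Nat.centralBinom]
      have heven := Aker_even m hm1
      have hcb := myCB_real m hm1
      have hr : (0 : ℝ) < Real.sqrt m := Real.sqrt_pos.2 (by exact_mod_cast hm1)
      have hsqrt := mySqrt_step m hm1 (1/2) (by norm_num) (by norm_num)
      have hC : (4 : ℝ) ^ m / Real.sqrt m ≤ 2 * (Nat.centralBinom m : ℝ) := by
        rw [div_le_iff₀ hr]
        nlinarith [hcb]
      have hp : (2 : ℝ) ^ (2 * m + 1) = 2 * 4 ^ m := by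
        rw [pow_succ, pow_mul]
        norm_num
        ring
      have he : (((2 * m + 1 : ℕ) : ℝ)) / 2 = (m : ℝ) + 1 / 2 := by
        push_cast
        ring
      rw [hA, hp, he]
      have h5 : 2 * (4 : ℝ) ^ m * Real.sqrt ((m : ℝ) + 1 / 2)
          ≤ 2 * (4 : ℝ) ^ m * (Real.sqrt m + 1 / (2 * Real.sqrt m)) :=
        mul_le_mul_of_nonneg_left hsqrt (by positivity)
      have h6 : 2 * (4 : ℝ) ^ m * (Real.sqrt m + 1 / (2 * Real.sqrt m))
          = 2 * ((4 : ℝ) ^ m * Real.sqrt m) + ((4 : ℝ) ^ m / Real.sqrt m) := by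
        field_simp
      nlinarith [heven, hC, h5, h6]

/-- comparator basis vector -/
def ev (d j : ℕ) : Fin d → ℝ := fun k => if (k : ℕ) = j then 1 else 0

/-- the adversary direction `e₁ - e₂` -/
def wv (d : ℕ) : Fin d → ℝ := fun k => if (k : ℕ) = 0 then 1 else if (k : ℕ) = 1 then -1 else 0

/-- sign pattern associated with a subset `s ⊆ [1,T]` -/
def sgn (T : ℕ) (s : Finset ℕ) (t : ℕ) : ℝ :=
  if t ∈ s then 1 else if t ∈ Finset.Icc 1 T then -1 else 0

/-- the adversarial losses -/
def Lv (d T : ℕ) (s : Finset ℕ) (t : ℕ) : Fin d → ℝ := fun k => sgn T s t * wv d k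

lemma sum_ite_val {d j : ℕ} (hj : j < d) (f : Fin d → ℝ) :
    ∑ k : Fin d, (if (k : ℕ) = j then f k else 0) = f ⟨j, hj⟩ := by
  rw [Finset.sum_eq_single (⟨j, hj⟩ : Fin d)]
  · simp
  · intro b _ hb
    rw [if_neg]
    simpa [Fin.ext_iff] using hb
  · intro h
    exact absurd (Finset.mem_univ _) h

lemma inp_wv {d : ℕ} (hd : 2 ≤ d) (v : Fin d → ℝ) :
    inp v (wv d) = v ⟨0, by omega⟩ - v ⟨1, by omega⟩ := by
  unfold inp wv
  have hpt : ∀ k : Fin d,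
      v k * (if (k : ℕ) = 0 then (1 : ℝ) else if (k : ℕ) = 1 then -1 else 0)
        = (if (k : ℕ) = 0 then v k else 0) - (if (k : ℕ) = 1 then v k else 0) := by
    intro k
    by_cases h0 : (k : ℕ) = 0
    · rw [if_pos h0, if_pos h0, if_neg (by omega)]
      ring
    · by_cases h1 : (k : ℕ) = 1
      · rw [if_neg h0, if_pos h1, if_neg h0, if_pos h1]
        ring
      · rw [if_neg h0, if_neg h1, if_neg h0, if_neg h1]
        ring
  rw [Finset.sum_congr rfl fun k _ => hpt k, Finset.sum_sub_distrib,
    sum_ite_val (by omega : 0 < d) v, sum_ite_val (by omega : 1 < d) v]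

lemma ev_mem_simplex {d j : ℕ} (hj : j < d) : ev d j ∈ simplex d := by
  constructor
  · intro k
    unfold ev
    split_ifs <;> norm_num
  · have := sum_ite_val hj (fun _ => (1 : ℝ))
    simpa [ev] using this

lemma abs_sgn_le (T : ℕ) (s : Finset ℕ) (t : ℕ) : |sgn T s t| ≤ 1 := by
  unfold sgn
  split_ifs <;> norm_num

lemma abs_wv_le (d : ℕ) (k : Fin d) : |wv d k| ≤ 1 := by
  unfold wv
  split_ifs <;> norm_num

/-- √(T/2) regret lower bound for online linear optimization over the
simplex (Lemma `olo_simplex_lower`). -/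
theorem olo_simplex_sqrt_lower_bound
    (d T : ℕ) (hd : 2 ≤ d) (hT : 1 ≤ T)
    -- an arbitrary online algorithm: x⁽ᵗ⁾ depends only on ℓ⁽¹⁾,…,ℓ⁽ᵗ⁻¹⁾
    (alg : (ℕ → Fin d → ℝ) → ℕ → Fin d → ℝ)
    (halg : ∀ l t, alg l t ∈ simplex d)
    (hcausal : ∀ l l' t, (∀ s, 1 ≤ s → s < t → l s = l' s) → alg l t = alg l' t) :
    ∃ l : ℕ → Fin d → ℝ,
      (∀ t ∈ Finset.Icc 1 T, linf (l t) ≤ 1) ∧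
      ∃ us ∈ simplex d,
        Real.sqrt ((T : ℝ) / 2)
          ≤ ∑ t ∈ Finset.Icc 1 T, inp (alg l t - us) (l t) := by

  classical
  -- pointwise regret decomposition
  have step : ∀ (s : Finset ℕ) (u : Fin d → ℝ) (t : ℕ),
      inp (alg (Lv d T s) t - u) (Lv d T s t)
        = sgn T s t * (inp (alg (Lv d T s) t) (wv d) - inp u (wv d)) := by
    intro s u t
    unfold inp
    have hpt : ∀ k, (alg (Lv d T s) t - u) k * Lv d T s t k
        = sgn T s t * ((alg (Lv d T s) t) k * wv d k - u k * wv d k) := by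
      intro k
      simp only [Lv, Pi.sub_apply]
      ring
    rw [Finset.sum_congr rfl fun k _ => hpt k, ← Finset.mul_sum, Finset.sum_sub_distrib]
  -- the sum of the signs
  have hS : ∀ s ∈ (Finset.Icc 1 T).powerset,
      ∑ t ∈ Finset.Icc 1 T, sgn T s t = 2 * (s.card : ℝ) - T := by
    intro s hs
    rw [Finset.mem_powerset] at hs
    have hc : s.card ≤ T := by
      have := Finset.card_le_card hs
      simpa [Nat.card_Icc] using this
    rw [← Finset.sum_sdiff hs]
    have h1 : ∑ t ∈ s, sgn T s t = (s.card : ℝ) := by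
      calc ∑ t ∈ s, sgn T s t = ∑ _t ∈ s, (1 : ℝ) :=
            Finset.sum_congr rfl fun t ht => by simp [sgn, ht]
        _ = (s.card : ℝ) := by simp
    have h2 : ∑ t ∈ Finset.Icc 1 T \ s, sgn T s t = -(((T - s.card : ℕ)) : ℝ) := by
      calc ∑ t ∈ Finset.Icc 1 T \ s, sgn T s t = ∑ t ∈ Finset.Icc 1 T \ s, (-1 : ℝ) := by
            refine Finset.sum_congr rfl fun t ht => ?_
            rw [Finset.mem_sdiff] at ht
            simp [sgn, ht.1, ht.2]
        _ = -(((Finset.Icc 1 T \ s).card : ℕ) : ℝ) := by simp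
        _ = -(((T - s.card : ℕ)) : ℝ) := by
            rw [Finset.card_sdiff_of_subset hs, Nat.card_Icc]
            have he : T + 1 - 1 - s.card = T - s.card := by omega
            rw [he]
    rw [h1, h2]
    push_cast [hc]
    ring
  -- the algorithm part averages to zero
  have hG : ∑ s ∈ (Finset.Icc 1 T).powerset,
      ∑ t ∈ Finset.Icc 1 T, sgn T s t * inp (alg (Lv d T s) t) (wv d) = 0 := by
    rw [Finset.sum_comm]
    refine Finset.sum_eq_zero fun t ht => ?_
    have htmem : t ∈ Finset.Icc 1 T := ht
    refine Finset.sum_involution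
      (fun s _ => if t ∈ s then s.erase t else insert t s) ?_ ?_ ?_ ?_
    · -- f a + f (g a) = 0
      intro s _
      have hmem : ∀ r, r ≠ t → (r ∈ (if t ∈ s then s.erase t else insert t s) ↔ r ∈ s) := by
        intro r hr
        by_cases h : t ∈ s <;> simp [h, hr, Finset.mem_erase, Finset.mem_insert]
      have halgeq : alg (Lv d T (if t ∈ s then s.erase t else insert t s)) t
          = alg (Lv d T s) t := by
        refine hcausal _ _ t fun r hr1 hr2 => ?_
        funext k
        have hrt : r ≠ t := by omega
        simp only [Lv, sgn]
        rw [if_congr (hmem r hrt) rfl rfl]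
      have hsgflip : sgn T (if t ∈ s then s.erase t else insert t s) t = -sgn T s t := by
        by_cases h : t ∈ s
        · simp [sgn, h, Finset.mem_erase, htmem]
        · simp [sgn, h, Finset.mem_insert, htmem]
      rw [halgeq, hsgflip]
      ring
    · -- g a ≠ a when f a ≠ 0
      intro s _ _
      beta_reduce
      by_cases h : t ∈ s
      · rw [if_pos h]
        intro hcon
        rw [← hcon] at h
        exact (Finset.notMem_erase t s) h
      · rw [if_neg h]
        intro hcon
        exact h (hcon ▸ Finset.mem_insert_self t s)
    · -- g a ∈ powerset
      intro s hs
      beta_reduce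
      rw [Finset.mem_powerset] at hs ⊢
      by_cases h : t ∈ s
      · rw [if_pos h]
        exact (Finset.erase_subset t s).trans hs
      · rw [if_neg h]
        exact Finset.insert_subset htmem hs
    · -- involution
      intro s _
      beta_reduce
      by_cases h : t ∈ s
      · simp [h, Finset.notMem_erase, Finset.insert_erase h]
      · simp [h, Finset.mem_insert_self, Finset.erase_insert h]
  -- the absolute-value part is the Khintchine sum
  have hAbs : ∑ s ∈ (Finset.Icc 1 T).powerset, |2 * (s.card : ℝ) - T| = Aker T := by
    rw [Finset.sum_powerset_apply_card (fun m => |2 * (m : ℝ) - T|)]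
    unfold Aker
    rw [Nat.card_Icc]
    simp [nsmul_eq_mul]
  -- combine: average regret is at least √(T/2)
  have havg : ∑ s ∈ (Finset.Icc 1 T).powerset, Real.sqrt ((T : ℝ) / 2)
      ≤ ∑ s ∈ (Finset.Icc 1 T).powerset,
          ((∑ t ∈ Finset.Icc 1 T, sgn T s t * inp (alg (Lv d T s) t) (wv d))
            + |2 * (s.card : ℝ) - T|) := by
    rw [Finset.sum_add_distrib, hG, hAbs, zero_add, Finset.sum_const,
      Finset.card_powerset, Nat.card_Icc, nsmul_eq_mul]
    have h := Aker_lower T hT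
    calc ((2 ^ (T + 1 - 1) : ℕ) : ℝ) * Real.sqrt ((T : ℝ) / 2)
        = (2 : ℝ) ^ T * Real.sqrt ((T : ℝ) / 2) := by norm_num
      _ ≤ Aker T := h
  obtain ⟨s₀, hs₀, hs₀R⟩ := Finset.exists_le_of_sum_le
    ⟨∅, Finset.empty_mem_powerset _⟩ havg
  -- choose the comparator
  set u : Fin d → ℝ := if (T : ℝ) ≤ 2 * (s₀.card : ℝ) then ev d 1 else ev d 0 with hu
  have husimp : u ∈ simplex d := by
    rw [hu]
    split_ifs
    · exact ev_mem_simplex (by omega)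
    · exact ev_mem_simplex (by omega)
  have huw : inp u (wv d) = if (T : ℝ) ≤ 2 * (s₀.card : ℝ) then (-1 : ℝ) else 1 := by
    rw [hu]
    split_ifs with h
    · rw [inp_wv hd]
      simp [ev]
    · rw [inp_wv hd]
      simp [ev]
  -- final conclusion
  refine ⟨Lv d T s₀, ?_, u, husimp, ?_⟩
  · -- linf bound
    intro t _
    unfold linf
    have hnei : Nonempty (Fin d) := ⟨⟨0, by omega⟩⟩
    refine ciSup_le fun k => ?_
    calc |Lv d T s₀ t k| = |sgn T s₀ t| * |wv d k| := abs_mul _ _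
      _ ≤ 1 := mul_le_one₀ (abs_sgn_le T s₀ t) (abs_nonneg _) (abs_wv_le d k)
  · -- regret bound
    have hexp : ∑ t ∈ Finset.Icc 1 T, inp (alg (Lv d T s₀) t - u) (Lv d T s₀ t)
        = (∑ t ∈ Finset.Icc 1 T, sgn T s₀ t * inp (alg (Lv d T s₀) t) (wv d))
            + |2 * (s₀.card : ℝ) - T| := by
      rw [Finset.sum_congr rfl fun t _ => step s₀ u t]
      simp only [mul_sub]
      rw [Finset.sum_sub_distrib, ← Finset.sum_mul, hS s₀ hs₀, huw]
      congr 1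
      split_ifs with h
      · rw [abs_of_nonneg (by linarith)]
        ring
      · push_neg at h
        rw [abs_of_nonpos (by linarith)]
        ring
    rw [hexp]
    exact hs₀R
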